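/- arXiv:2003.00362 — 2 statements merged into one kernel-verified Lean document; each statement's English description precedes it below -/
import Mathlib

section
/- Let U be a recursive max-linear vector with propagating noise: U = (U ⊙ C ∨ Z) ⊙ E_d, where E_d is the diagonal matrix with entries ε_1,…,ε_d ≥ 1. Then U = Z ⊙ B̄, where B̄ = E_d ⊙ (I_d ∨ C̄)^{⊙(d-1)} and C̄ = C ⊙ E_d, and this solution is unique. -/
open Matrix Finset MeasureTheory ProbabilityTheory Filter

noncomputable section

/-- Max-times (tropical) matrix product: `(F ⊙ G) i j = ⋁ k, F i k * G k j`. -/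
def mOdot {m n p : ℕ} (F : Matrix (Fin m) (Fin n) NNReal) (G : Matrix (Fin n) (Fin p) NNReal) :
    Matrix (Fin m) (Fin p) NNReal :=
  Matrix.of fun i j => Finset.univ.sup fun k => F i k * G k j

/-- Entrywise maximum of two matrices. -/
def mSup {m n : ℕ} (A B : Matrix (Fin m) (Fin n) NNReal) : Matrix (Fin m) (Fin n) NNReal :=
  Matrix.of fun i j => A i j ⊔ B i j

/-- Max-times power: `A^{⊙0} = I`, `A^{⊙(k+1)} = A^{⊙k} ⊙ A`. -/
def mPow {d : ℕ} (A : Matrix (Fin d) (Fin d) NNReal) : ℕ → Matrix (Fin d) (Fin d) NNReal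
  | 0 => 1
  | k + 1 => mOdot (mPow A k) A

/-- Kleene star: `B = ⋁_{k=0}^{d-1} C^{⊙k}`. -/
def kleene {d : ℕ} (C : Matrix (Fin d) (Fin d) NNReal) : Matrix (Fin d) (Fin d) NNReal :=
  Matrix.of fun i j => (Finset.range d).sup fun k => mPow C k i j

/-- `IsWalk C i j l` : `l` is the list of vertices after `i` of a walk from `i` to `j`
    along positive entries of `C`. -/
def IsWalk {d : ℕ} (C : Matrix (Fin d) (Fin d) NNReal) : Fin d → Fin d → List (Fin d) → Prop
  | i, j, [] => i = j
  | i, j, k :: l => 0 < C i k ∧ IsWalk C k j l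

/-- Deterministic path weight: product of edge weights along a walk. -/
def walkWeight {d : ℕ} (C : Matrix (Fin d) (Fin d) NNReal) : Fin d → List (Fin d) → NNReal
  | _, [] => 1
  | i, k :: l => C i k * walkWeight C k l

/-- Acyclicity: the only walk from a vertex to itself is the empty one. -/
def Acyclic {d : ℕ} (C : Matrix (Fin d) (Fin d) NNReal) : Prop :=
  ∀ i l, IsWalk C i i l → l = []

/-- Non-noisy ML coefficient: maximal deterministic path weight from `j` to `i`
    (`1` on the diagonal; `0` if there is no path). -/
def detB {d : ℕ} (C : Matrix (Fin d) (Fin d) NNReal) (j i : Fin d) : NNReal :=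
  sSup {w | ∃ l, IsWalk C j i l ∧ w = walkWeight C j l}

/-- Noisy path weight (without the initial noise factor `ε j`):
    `∏_l c_{k_l k_{l+1}} ε_{k_{l+1}}` along a walk. -/
def noisyWeight {d : ℕ} (C : Matrix (Fin d) (Fin d) NNReal) (ε : Fin d → NNReal) :
    Fin d → List (Fin d) → NNReal
  | _, [] => 1
  | i, k :: l => C i k * ε k * noisyWeight C ε k l

/-- Random (noisy) ML coefficient `b̄_{ji}`: maximal random path weight
    `d̄_{ji}(p) = ε_j ∏ c ε` from `j` to `i`; equals `ε j` on the diagonal,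
    `0` if `j` is not an ancestor of `i`. -/
def barB {d : ℕ} (C : Matrix (Fin d) (Fin d) NNReal) (ε : Fin d → NNReal) (j i : Fin d) :
    NNReal :=
  sSup {w | ∃ l, IsWalk C j i l ∧ w = ε j * noisyWeight C ε j l}

/-- `j` is a strict ancestor of `i` (there exists a nonempty path). -/
def Reach {d : ℕ} (C : Matrix (Fin d) (Fin d) NNReal) (j i : Fin d) : Prop :=
  ∃ l, l ≠ [] ∧ IsWalk C j i l

/-- Max-times product of a row vector with a matrix. -/
def vOdot {d : ℕ} (x : Fin d → NNReal) (A : Matrix (Fin d) (Fin d) NNReal) : Fin d → NNReal :=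
  fun j => Finset.univ.sup fun k => x k * A k j

/-- Componentwise maximum of two vectors. -/
def vSup {d : ℕ} (x y : Fin d → NNReal) : Fin d → NNReal := fun i => x i ⊔ y i

/-- Maximum of `f k` over all `k` satisfying `P` (0 if there is none). -/
def supOver {d : ℕ} (P : Fin d → Prop) (f : Fin d → NNReal) : NNReal :=
  sSup {w | ∃ k, P k ∧ w = f k}

end

noncomputable section NoisyAux

open Finset

variable {d : ℕ}

lemma fsup_sup {ι : Type*} (s : Finset ι) (f g : ι → NNReal) :
    (s.sup fun k => f k ⊔ g k) = s.sup f ⊔ s.sup g := by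
  apply le_antisymm
  · exact Finset.sup_le fun k hk => sup_le_sup (Finset.le_sup hk) (Finset.le_sup hk)
  · exact sup_le (Finset.sup_mono_fun fun k _ => le_sup_left)
      (Finset.sup_mono_fun fun k _ => le_sup_right)

lemma mOdot_apply {m n p : ℕ} (F : Matrix (Fin m) (Fin n) NNReal)
    (G : Matrix (Fin n) (Fin p) NNReal) (i j) :
    mOdot F G i j = Finset.univ.sup fun k => F i k * G k j := rfl

lemma mSup_apply (A B : Matrix (Fin d) (Fin d) NNReal) (i j) : mSup A B i j = A i j ⊔ B i j := rfl

lemma vOdot_apply (x : Fin d → NNReal) (A : Matrix (Fin d) (Fin d) NNReal) (j) :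
    vOdot x A j = Finset.univ.sup fun k => x k * A k j := rfl

lemma vSup_apply (x y : Fin d → NNReal) (i) : vSup x y i = x i ⊔ y i := rfl

lemma mSup_comm (A B : Matrix (Fin d) (Fin d) NNReal) : mSup A B = mSup B A := by
  refine Matrix.ext fun i j => ?_
  rw [mSup_apply, mSup_apply, sup_comm]

lemma vSup_comm (x y : Fin d → NNReal) : vSup x y = vSup y x := by
  funext i; simp [vSup_apply, sup_comm]

lemma vSup_assoc (x y z : Fin d → NNReal) : vSup (vSup x y) z = vSup x (vSup y z) := by
  funext i; simp [vSup_apply, sup_assoc]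

lemma vSup_zero_left (x : Fin d → NNReal) : vSup 0 x = x := by
  funext i; simp [vSup_apply]

lemma vOdot_zero (x : Fin d → NNReal) : vOdot x (0 : Matrix (Fin d) (Fin d) NNReal) = 0 := by
  funext j; simp [vOdot_apply]

lemma vOdot_vSup (x y : Fin d → NNReal) (A : Matrix (Fin d) (Fin d) NNReal) :
    vOdot (vSup x y) A = vSup (vOdot x A) (vOdot y A) := by
  funext j
  simp only [vOdot_apply, vSup_apply]
  rw [← fsup_sup]
  exact Finset.sup_congr rfl fun k _ => NNReal.sup_mul _ _ _

lemma vOdot_assoc (x : Fin d → NNReal) (A B : Matrix (Fin d) (Fin d) NNReal) :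
    vOdot (vOdot x A) B = vOdot x (mOdot A B) := by
  funext j
  simp only [vOdot_apply, mOdot_apply]
  calc (Finset.univ.sup fun l => (Finset.univ.sup fun k => x k * A k l) * B l j)
      = Finset.univ.sup fun l => Finset.univ.sup fun k => x k * A k l * B l j :=
        Finset.sup_congr rfl fun l _ => NNReal.finset_sup_mul _ _ _
    _ = Finset.univ.sup fun k => Finset.univ.sup fun l => x k * A k l * B l j :=
        Finset.sup_comm _ _ _
    _ = Finset.univ.sup fun k => x k * Finset.univ.sup fun l => A k l * B l j := by
        refine Finset.sup_congr rfl fun k _ => ?_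
        rw [NNReal.mul_finset_sup]
        exact Finset.sup_congr rfl fun l _ => mul_assoc _ _ _

lemma vOdot_diag (x ε : Fin d → NNReal) :
    vOdot x (Matrix.diagonal ε) = fun j => x j * ε j := by
  funext j
  apply le_antisymm
  · refine Finset.sup_le fun k _ => ?_
    by_cases h : k = j
    · subst h; rw [Matrix.diagonal_apply_eq]
    · rw [Matrix.diagonal_apply_ne _ h]; simp
  · have := Finset.le_sup (f := fun k => x k * Matrix.diagonal ε k j) (Finset.mem_univ j)
    simpa [vOdot_apply] using this

lemma mOdot_diag (X : Matrix (Fin d) (Fin d) NNReal) (ε : Fin d → NNReal) (i j) :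
    mOdot X (Matrix.diagonal ε) i j = X i j * ε j :=
  congrFun (vOdot_diag (fun k => X i k) ε) j

lemma diag_mOdot (X : Matrix (Fin d) (Fin d) NNReal) (ε : Fin d → NNReal) (i j) :
    mOdot (Matrix.diagonal ε) X i j = ε i * X i j := by
  rw [mOdot_apply]
  apply le_antisymm
  · refine Finset.sup_le fun k _ => ?_
    by_cases h : i = k
    · subst h; rw [Matrix.diagonal_apply_eq]
    · rw [Matrix.diagonal_apply_ne _ h]; simp
  · have := Finset.le_sup (f := fun k => Matrix.diagonal ε i k * X k j) (Finset.mem_univ i)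
    simpa using this

lemma vOdot_one (x : Fin d → NNReal) : vOdot x (1 : Matrix (Fin d) (Fin d) NNReal) = x := by
  rw [← Matrix.diagonal_one, vOdot_diag]
  funext j
  exact mul_one _

lemma mOdot_one_right (X : Matrix (Fin d) (Fin d) NNReal) : mOdot X 1 = X := by
  refine Matrix.ext fun i j => ?_
  rw [← Matrix.diagonal_one, mOdot_diag]
  exact mul_one _

lemma mOdot_one_left (X : Matrix (Fin d) (Fin d) NNReal) : mOdot 1 X = X := by
  refine Matrix.ext fun i j => ?_
  rw [← Matrix.diagonal_one, diag_mOdot]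
  exact one_mul _

lemma mOdot_mSup_right (X P Q : Matrix (Fin d) (Fin d) NNReal) :
    mOdot X (mSup P Q) = mSup (mOdot X P) (mOdot X Q) := by
  refine Matrix.ext fun i j => ?_
  simp only [mOdot_apply, mSup_apply]
  rw [← fsup_sup]
  exact Finset.sup_congr rfl fun k _ => NNReal.mul_sup _ _ _

lemma vOdot_mSup (x : Fin d → NNReal) (P Q : Matrix (Fin d) (Fin d) NNReal) :
    vOdot x (mSup P Q) = vSup (vOdot x P) (vOdot x Q) := by
  funext j
  simp only [vOdot_apply, mSup_apply, vSup_apply]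
  rw [← fsup_sup]
  exact Finset.sup_congr rfl fun k _ => NNReal.mul_sup _ _ _

lemma le_mPow_succ (M : Matrix (Fin d) (Fin d) NNReal) (n : ℕ) (i j : Fin d) :
    mPow (mSup 1 M) n i j ≤ mPow (mSup 1 M) (n + 1) i j := by
  have h : mPow (mSup 1 M) (n + 1) = mSup (mPow (mSup 1 M) n) (mOdot (mPow (mSup 1 M) n) M) := by
    show mOdot (mPow (mSup 1 M) n) (mSup 1 M) = _
    rw [mOdot_mSup_right, mOdot_one_right]
  rw [h, mSup_apply]; exact le_sup_left

/-- Key Kleene identity: `(1 ⊔ M)^{n+1} = 1 ⊔ ((1 ⊔ M)^n ⊙ M)`. -/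
lemma mPow_mSup_succ (M : Matrix (Fin d) (Fin d) NNReal) (n : ℕ) :
    mPow (mSup 1 M) (n + 1) = mSup 1 (mOdot (mPow (mSup 1 M) n) M) := by
  induction n with
  | zero =>
    show mOdot (mPow (mSup 1 M) 0) (mSup 1 M) = mSup 1 (mOdot (mPow (mSup 1 M) 0) M)
    show mOdot 1 (mSup 1 M) = mSup 1 (mOdot 1 M)
    rw [mOdot_one_left, mOdot_one_left]
  | succ n ih =>
    have h1 : mPow (mSup 1 M) (n + 2) =
        mSup (mPow (mSup 1 M) (n + 1)) (mOdot (mPow (mSup 1 M) (n + 1)) M) := by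
      show mOdot (mPow (mSup 1 M) (n+1)) (mSup 1 M) = _
      rw [mOdot_mSup_right, mOdot_one_right]
    rw [h1]
    nth_rewrite 1 [ih]
    refine Matrix.ext fun i j => ?_
    simp only [mSup_apply]
    rw [sup_assoc]
    congr 1
    refine sup_eq_right.2 ?_
    rw [mOdot_apply, mOdot_apply]
    exact Finset.sup_mono_fun fun k _ => mul_le_mul_left (le_mPow_succ M n i k) _

lemma sup_range_succ' (f : ℕ → NNReal) (n : ℕ) :
    (Finset.range (n + 1)).sup f = f 0 ⊔ (Finset.range n).sup fun t => f (t + 1) := by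
  induction n with
  | zero =>
    rw [Finset.range_one, Finset.sup_singleton, Finset.range_zero, Finset.sup_empty]
    exact (sup_bot_eq _).symm
  | succ n ih =>
    rw [Finset.range_add_one, Finset.sup_insert, ih, Finset.range_add_one, Finset.sup_insert]
    rw [← sup_assoc, sup_comm (f (n+1)) (f 0), sup_assoc]

/-- `(1 ⊔ M)^n = ⋁_{k ≤ n} M^k` entrywise. -/
lemma mPow_mSup_eq_sup (M : Matrix (Fin d) (Fin d) NNReal) :
    ∀ (n : ℕ) (i j : Fin d), mPow (mSup 1 M) n i j = (Finset.range (n + 1)).sup fun k => mPow M k i j := by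
  intro n
  induction n with
  | zero =>
    intro i j
    rw [Finset.range_one, Finset.sup_singleton]
    rfl
  | succ n ih =>
    intro i j
    rw [mPow_mSup_succ, mSup_apply, mOdot_apply, sup_range_succ']
    congr 1
    calc (Finset.univ.sup fun k => mPow (mSup 1 M) n i k * M k j)
        = Finset.univ.sup fun k => (Finset.range (n+1)).sup fun t => mPow M t i k * M k j := by
          congr 1; funext k; rw [ih i k, NNReal.finset_sup_mul]
      _ = (Finset.range (n+1)).sup fun t => Finset.univ.sup fun k => mPow M t i k * M k j :=
          Finset.sup_comm _ _ _
      _ = (Finset.range (n+1)).sup fun t => mPow M (t + 1) i j :=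
          Finset.sup_congr rfl fun t _ => rfl

/-- Nilpotency bound for `C ⊙ diag ε`. -/
lemma mPow_bar_le (C : Matrix (Fin d) (Fin d) NNReal) (ε : Fin d → NNReal) :
    ∀ (n : ℕ) (i j : Fin d),
      mPow (mOdot C (Matrix.diagonal ε)) n i j ≤ (Finset.univ.sup ε) ^ n * mPow C n i j := by
  intro n
  induction n with
  | zero =>
    intro i j
    rw [pow_zero, one_mul]
    exact le_rfl
  | succ n ih =>
    intro i j
    set K := Finset.univ.sup ε with hK
    show (Finset.univ.sup fun k =>
        mPow (mOdot C (Matrix.diagonal ε)) n i k * mOdot C (Matrix.diagonal ε) k j) ≤ _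
    refine Finset.sup_le fun k _ => ?_
    have hεj : ε j ≤ K := Finset.le_sup (Finset.mem_univ j)
    calc mPow (mOdot C (Matrix.diagonal ε)) n i k * mOdot C (Matrix.diagonal ε) k j
        ≤ (K ^ n * mPow C n i k) * (C k j * K) := by
          refine mul_le_mul' (ih i k) ?_
          rw [mOdot_diag]
          exact mul_le_mul_right hεj _
      _ = K ^ (n + 1) * (mPow C n i k * C k j) := by ring
      _ ≤ K ^ (n + 1) * mPow C (n + 1) i j := by
          refine mul_le_mul_right ?_ _
          exact Finset.le_sup (f := fun k => mPow C n i k * C k j) (Finset.mem_univ k)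

end NoisyAux

/-- the noisy SEM `U = (U ⊙ C ∨ Z) ⊙ E_d` has the unique solution
`U = Z ⊙ B̄` with `B̄ = E_d ⊙ (I_d ∨ C̄)^{⊙(d-1)}`, `C̄ = C ⊙ E_d`,
`E_d = diag(ε_1,…,ε_d)`, `ε_i ≥ 1`. -/
theorem noisy_sem_unique_solution (d : ℕ) (C : Matrix (Fin d) (Fin d) NNReal)
    (Z ε : Fin d → NNReal) (hZ : ∀ i, 0 < Z i) (hε : ∀ i, 1 ≤ ε i)
    (hnilp : mPow C d = 0) :
    vOdot (vSup (vOdot (vOdot Z (mOdot (Matrix.diagonal ε)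
        (mPow (mSup 1 (mOdot C (Matrix.diagonal ε))) (d - 1)))) C) Z) (Matrix.diagonal ε)
      = vOdot Z (mOdot (Matrix.diagonal ε)
        (mPow (mSup 1 (mOdot C (Matrix.diagonal ε))) (d - 1))) ∧
    ∀ U : Fin d → NNReal,
      vOdot (vSup (vOdot U C) Z) (Matrix.diagonal ε) = U →
      U = vOdot Z (mOdot (Matrix.diagonal ε)
        (mPow (mSup 1 (mOdot C (Matrix.diagonal ε))) (d - 1))) := by
  cases d with
  | zero =>
    exact ⟨funext fun j => j.elim0, fun U _ => funext fun j => j.elim0⟩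
  | succ n =>
    simp only [Nat.add_sub_cancel]
    set E := Matrix.diagonal ε with hE
    set M := mOdot C E with hM
    have hM0 : ∀ i j, mPow M (n + 1) i j = 0 := by
      intro i j
      refine le_antisymm ?_ zero_le
      calc mPow M (n + 1) i j ≤ (Finset.univ.sup ε) ^ (n + 1) * mPow C (n + 1) i j :=
            mPow_bar_le C ε (n + 1) i j
        _ = 0 := by rw [hnilp]; simp
    have hMnil : mPow M (n + 1) = (0 : Matrix (Fin (n+1)) (Fin (n+1)) NNReal) :=
      Matrix.ext fun i j => hM0 i j
    set v := vOdot Z E with hv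
    have hWZ : vOdot Z (mOdot E (mPow (mSup 1 M) n)) = vOdot v (mPow (mSup 1 M) n) := by
      rw [hv, ← vOdot_assoc]
    have hstep : ∀ x : Fin (n+1) → NNReal,
        vOdot (vSup (vOdot x C) Z) E = vSup (vOdot x M) v := by
      intro x
      rw [vOdot_vSup, vOdot_assoc, ← hM, ← hv]
    have hAeq : mPow (mSup 1 M) (n + 1) = mPow (mSup 1 M) n := by
      refine Matrix.ext fun i j => ?_
      rw [mPow_mSup_eq_sup, mPow_mSup_eq_sup, Finset.range_add_one, Finset.sup_insert, hM0 i j]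
      exact sup_eq_right.2 zero_le
    have habs : ∀ P : Matrix (Fin (n+1)) (Fin (n+1)) NNReal, ∀ m : ℕ,
        vSup (vOdot v (mOdot (mPow (mSup 1 M) m) M)) v = vOdot v (mPow (mSup 1 M) (m + 1)) := by
      intro P m
      calc vSup (vOdot v (mOdot (mPow (mSup 1 M) m) M)) v
          = vSup (vOdot v (mOdot (mPow (mSup 1 M) m) M)) (vOdot v 1) := by rw [vOdot_one]
        _ = vOdot v (mSup (mOdot (mPow (mSup 1 M) m) M) 1) := (vOdot_mSup _ _ _).symm
        _ = vOdot v (mSup 1 (mOdot (mPow (mSup 1 M) m) M)) := by rw [mSup_comm]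
        _ = vOdot v (mPow (mSup 1 M) (m + 1)) := by rw [← mPow_mSup_succ M m]
    constructor
    · rw [hWZ, hstep]
      have h2 : vOdot (vOdot v (mPow (mSup 1 M) n)) M
          = vOdot v (mOdot (mPow (mSup 1 M) n) M) := vOdot_assoc _ _ _
      rw [h2, habs M n, hAeq]
    · intro U hU
      rw [hstep U] at hU
      have key : ∀ m, U = vSup (vOdot U (mPow M (m + 1))) (vOdot v (mPow (mSup 1 M) m)) := by
        intro m
        induction m with
        | zero =>
          have h1 : mPow M 1 = M := mOdot_one_left M
          have h0 : mPow (mSup 1 M) 0 = (1 : Matrix (Fin (n+1)) (Fin (n+1)) NNReal) := rfl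
          rw [h1, h0, vOdot_one]
          exact hU.symm
        | succ m ih =>
          calc U = vSup (vOdot U M) v := hU.symm
            _ = vSup (vOdot (vSup (vOdot U (mPow M (m + 1)))
                  (vOdot v (mPow (mSup 1 M) m))) M) v := by rw [← ih]
            _ = vSup (vSup (vOdot (vOdot U (mPow M (m + 1))) M)
                  (vOdot (vOdot v (mPow (mSup 1 M) m)) M)) v := by rw [vOdot_vSup]
            _ = vSup (vOdot U (mPow M (m + 2)))
                  (vSup (vOdot v (mOdot (mPow (mSup 1 M) m) M)) v) := by
                rw [vOdot_assoc, vOdot_assoc, vSup_assoc]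
                rfl
            _ = vSup (vOdot U (mPow M (m + 2))) (vOdot v (mPow (mSup 1 M) (m + 1))) := by
                rw [habs M m]
      have hfin := key n
      rw [hMnil, vOdot_zero, vSup_zero_left] at hfin
      rw [hWZ]
      exact hfin
end

section
/- In the recursive max-linear model with propagating noise, for a node k ∈ de(j) ∩ an(i), there exists a path p from j to i passing through k with d̄_{ji}(p) = b̄_{ji} if and only if b̄_{ji} = b̄_{jk} b̄_{ki} / b̄_{kk}. -/
open Matrix Finset MeasureTheory ProbabilityTheory Filter

section Aux

variable {d : ℕ} {C : Matrix (Fin d) (Fin d) NNReal} {ε : Fin d → NNReal}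

lemma isWalk_append {j k i : Fin d} {l₁ l₂ : List (Fin d)}
    (h1 : IsWalk C j k l₁) (h2 : IsWalk C k i l₂) : IsWalk C j i (l₁ ++ l₂) := by
  induction l₁ generalizing j with
  | nil => cases h1; simpa using h2
  | cons a t ih => exact ⟨h1.1, ih h1.2⟩

lemma noisyWeight_append {j k : Fin d} {l₁ : List (Fin d)} (l₂ : List (Fin d))
    (h1 : IsWalk C j k l₁) :
    noisyWeight C ε j (l₁ ++ l₂) = noisyWeight C ε j l₁ * noisyWeight C ε k l₂ := by
  induction l₁ generalizing j with
  | nil => cases h1; simp [noisyWeight]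
  | cons a t ih =>
      rw [List.cons_append]
      show C j a * ε a * noisyWeight C ε a (t ++ l₂)
          = C j a * ε a * noisyWeight C ε a t * noisyWeight C ε k l₂
      rw [ih h1.2]; ring

lemma walk_to_mem {l : List (Fin d)} {x y k : Fin d} (h : IsWalk C x y l) (hk : k ∈ l) :
    ∃ s, s ≠ [] ∧ IsWalk C x k s := by
  induction l generalizing x with
  | nil => cases hk
  | cons a t ih =>
      rcases List.mem_cons.1 hk with rfl | hk'
      · exact ⟨[k], by simp, h.1, rfl⟩
      · obtain ⟨s, hs, hw⟩ := ih h.2 hk'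
        exact ⟨a :: s, by simp, h.1, hw⟩

lemma walk_nodup (hacyc : Acyclic C) {l : List (Fin d)} {x y : Fin d}
    (h : IsWalk C x y l) : l.Nodup := by
  induction l generalizing x with
  | nil => simp
  | cons a t ih =>
      refine List.nodup_cons.2 ⟨fun hmem => ?_, ih h.2⟩
      obtain ⟨s, hs, hw⟩ := walk_to_mem h.2 hmem
      exact hs (hacyc a s hw)

lemma walkSet_finite (hacyc : Acyclic C) (j i : Fin d) :
    {l : List (Fin d) | IsWalk C j i l}.Finite := by
  apply Set.Finite.subset (List.finite_length_le (Fin d) d)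
  intro l hl
  simpa using (walk_nodup hacyc hl).length_le_card

lemma weightSet_finite (hacyc : Acyclic C) (j i : Fin d) :
    {w | ∃ l, IsWalk C j i l ∧ w = ε j * noisyWeight C ε j l}.Finite := by
  have : {w | ∃ l, IsWalk C j i l ∧ w = ε j * noisyWeight C ε j l}
      = (fun l => ε j * noisyWeight C ε j l) '' {l | IsWalk C j i l} := by
    ext w; simp [Set.mem_image, eq_comm, and_comm]
  rw [this]
  exact (walkSet_finite hacyc j i).image _

lemma le_barB (hacyc : Acyclic C) {j i : Fin d} {l : List (Fin d)} (h : IsWalk C j i l) :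
    ε j * noisyWeight C ε j l ≤ barB C ε j i :=
  le_csSup (weightSet_finite hacyc j i).bddAbove ⟨l, h, rfl⟩

lemma barB_attained (hacyc : Acyclic C) {j i : Fin d} (h : ∃ l, IsWalk C j i l) :
    ∃ l, IsWalk C j i l ∧ barB C ε j i = ε j * noisyWeight C ε j l := by
  obtain ⟨l0, hl0⟩ := h
  have hne : {w | ∃ l, IsWalk C j i l ∧ w = ε j * noisyWeight C ε j l}.Nonempty :=
    ⟨_, l0, hl0, rfl⟩
  have := hne.csSup_mem (weightSet_finite hacyc j i)
  obtain ⟨l, hl, he⟩ := this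
  exact ⟨l, hl, he⟩

lemma barB_diag (hacyc : Acyclic C) (k : Fin d) : barB C ε k k = ε k := by
  have : {w | ∃ l, IsWalk C k k l ∧ w = ε k * noisyWeight C ε k l} = {ε k} := by
    ext w
    constructor
    · rintro ⟨l, hl, rfl⟩
      have := hacyc k l hl
      subst this; simp [noisyWeight]
    · rintro rfl
      exact ⟨[], rfl, by simp [noisyWeight]⟩
  rw [barB, this, csSup_singleton]

end Aux

/-- for `k ∈ de(j) ∩ an(i)`, a random critical path from `j` to `i`
passes through `k` if and only if `b̄_{ji} = b̄_{jk} b̄_{ki} / b̄_{kk}`. -/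
theorem critical_through_iff (d : ℕ) (C : Matrix (Fin d) (Fin d) NNReal) (ε : Fin d → NNReal)
    (hacyc : Acyclic C) (hε : ∀ k, 1 ≤ ε k) (j i k : Fin d)
    (hjk : Reach C j k) (hki : Reach C k i) :
    (∃ l₁ l₂ : List (Fin d), IsWalk C j k l₁ ∧ IsWalk C k i l₂ ∧
        ε j * noisyWeight C ε j (l₁ ++ l₂) = barB C ε j i) ↔
      barB C ε j i = barB C ε j k * barB C ε k i / barB C ε k k := by
  have hεk : ε k ≠ 0 := (zero_lt_one.trans_le (hε k)).ne'
  rw [barB_diag hacyc k]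
  obtain ⟨l₁', _, hl₁'⟩ := hjk
  obtain ⟨l₂', _, hl₂'⟩ := hki
  obtain ⟨p, hp, hpe⟩ := barB_attained (ε := ε) hacyc ⟨l₁', hl₁'⟩
  obtain ⟨q, hq, hqe⟩ := barB_attained (ε := ε) hacyc ⟨l₂', hl₂'⟩
  have key : ∀ {l₁ l₂}, IsWalk C j k l₁ → IsWalk C k i l₂ →
      ε j * noisyWeight C ε j (l₁ ++ l₂) * ε k
        = (ε j * noisyWeight C ε j l₁) * (ε k * noisyWeight C ε k l₂) := by
    intro l₁ l₂ h1 h2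
    rw [noisyWeight_append l₂ h1]; ring
  have hge : barB C ε j k * barB C ε k i ≤ barB C ε j i * ε k := by
    rw [hpe, hqe, ← key hp hq]
    exact mul_le_mul_left (le_barB hacyc (isWalk_append hp hq)) _
  constructor
  · rintro ⟨l₁, l₂, h1, h2, heq⟩
    have hle : barB C ε j i * ε k ≤ barB C ε j k * barB C ε k i := by
      rw [← heq, key h1 h2]
      exact mul_le_mul' (le_barB hacyc h1) (le_barB hacyc h2)
    rw [eq_div_iff hεk]
    exact le_antisymm hle hge
  · intro h
    refine ⟨p, q, hp, hq, ?_⟩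
    have h' : barB C ε j i * ε k = barB C ε j k * barB C ε k i := by
      rw [h, div_mul_cancel₀ _ hεk]
    apply mul_right_cancel₀ hεk
    rw [key hp hq, ← hpe, ← hqe, h']
end
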